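/- Let A ∈ ℝ^{m×n} have columns a_1,…,a_n, let b ∈ ℝ^m with b ≠ 0, let p ∈ (0,1), λ > 0, and let k be an integer with 2 ≤ k ≤ n. If λ ≥ β(k) := k^{p/2−1} (2α/(p(1−p)))^{p/2} ‖b‖₂^{2−p}, where α = max_{1≤i≤n} ‖a_i‖₂², then every global minimizer x* of f_p over ℝ^n satisfies ‖x*‖₀ < k. -/

import Mathlib

/-- The objective `f_p(x) = ‖Ax − b‖₂² + λ Σ_i |x_i|^p`. -/
noncomputable def fp (m n : ℕ) (A : Matrix (Fin m) (Fin n) ℝ) (b : Fin m → ℝ)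
    (lam p : ℝ) (x : Fin n → ℝ) : ℝ :=
  (∑ i, (A.mulVec x i - b i) ^ 2) + lam * ∑ i, |x i| ^ p

private lemma aux_limit {c T ε : ℝ} (hT : 0 ≤ T) (hε : 0 < ε)
    (h : ∀ σ : ℝ, 0 < σ → σ < ε → c ≤ σ * T) : c ≤ 0 := by
  by_contra hc
  push_neg at hc
  have hT1 : (0:ℝ) < T + 1 := by linarith
  set σ := min (ε/2) (c/(T+1)) with hσdef
  have hσ0 : 0 < σ := lt_min (by linarith) (div_pos hc hT1)
  have hσε : σ < ε := lt_of_le_of_lt (min_le_left _ _) (by linarith)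
  have h1 := h σ hσ0 hσε
  have h2 : σ * (T+1) ≤ c := by
    have h3 : σ ≤ c/(T+1) := min_le_right _ _
    calc σ * (T+1) ≤ (c/(T+1)) * (T+1) := by nlinarith
    _ = c := by field_simp
  nlinarith

set_option maxHeartbeats 2000000 in
/-- If `λ ≥ β(k) = k^(p/2−1) (2α/(p(1−p)))^(p/2) ‖b‖^(2−p)`, where
`α = max_i ‖a_i‖²` is the largest squared column norm of `A`, then every global
minimizer of `f_p` has fewer than `k` nonzero entries. -/
theorem stmt_0 (m n : ℕ) (A : Matrix (Fin m) (Fin n) ℝ) (b : Fin m → ℝ)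
    (hb : b ≠ 0) (p lam : ℝ) (hp0 : 0 < p) (hp1 : p < 1) (hlam : 0 < lam)
    (k : ℕ) (hk2 : 2 ≤ k) (hkn : k ≤ n)
    (alpha : ℝ)
    (halpha : IsGreatest (Set.range fun i : Fin n => ∑ j, A j i ^ 2) alpha)
    (hlb : lam ≥ (k : ℝ) ^ (p / 2 - 1) * (2 * alpha / (p * (1 - p))) ^ (p / 2) *
      Real.sqrt (∑ i, b i ^ 2) ^ (2 - p))
    (x : Fin n → ℝ)
    (hmin : ∀ y : Fin n → ℝ, fp m n A b lam p x ≤ fp m n A b lam p y) :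
    (Finset.univ.filter fun i => x i ≠ 0).card < k := by
  by_contra hcon
  push_neg at hcon
  set F := Finset.univ.filter (fun i => x i ≠ 0) with hFdef
  have hFk : k ≤ F.card := hcon
  have hFne : F.Nonempty := Finset.card_pos.mp (by omega)
  set B := ∑ j, b j ^ 2 with hBdef
  have hB : 0 < B := by
    obtain ⟨j, hj⟩ := Function.ne_iff.mp hb
    refine Finset.sum_pos' (fun _ _ => sq_nonneg _) ⟨j, Finset.mem_univ j, ?_⟩
    rw [← sq_abs]
    exact pow_pos (abs_pos.mpr hj) 2
  set r : Fin m → ℝ := fun j => A.mulVec x j - b j with hrdef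
  set v : Fin n → ℝ := fun i => ∑ j, r j * A j i with hvdef
  set T : Fin n → ℝ := fun i => ∑ j, A j i ^ 2 with hTdef
  have hTnn : ∀ i, 0 ≤ T i := fun i => Finset.sum_nonneg fun j _ => sq_nonneg _
  have hTα : ∀ i, T i ≤ alpha := fun i => halpha.2 (Set.mem_range_self i)
  -- key perturbation inequality
  have hkey : ∀ (i : Fin n) (h : ℝ),
      0 ≤ 2*h*(v i) + h^2 * (T i) + lam * (|x i + h| ^ p - |x i| ^ p) := by
    intro i h
    have h0 := hmin (x + Pi.single i h)
    have e1 : ∀ j, A.mulVec (x + Pi.single i h) j = A.mulVec x j + A j i * h := by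
      intro j
      rw [Matrix.mulVec_add, Matrix.mulVec_single]
      rfl
    have e2 : ∑ l, |(x + Pi.single i h : Fin n → ℝ) l| ^ p
        = (∑ l, |x l| ^ p) + (|x i + h| ^ p - |x i| ^ p) := by
      have hupd : ∀ l, |(x + Pi.single i h : Fin n → ℝ) l| ^ p
          = Function.update (fun l => |x l| ^ p) i (|x i + h| ^ p) l := by
        intro l
        by_cases hl : l = i
        · subst hl; simp [Pi.single_apply]
        · simp [Function.update_of_ne hl, Pi.single_apply, hl]
      rw [Finset.sum_congr rfl fun l _ => hupd l,
        Finset.sum_update_of_mem (Finset.mem_univ i),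
        Finset.sum_eq_sum_sdiff_singleton_add (Finset.mem_univ i) (fun l => |x l| ^ p)]
      ring
    simp only [fp, e1] at h0
    have e3 : ∑ j, ((A.mulVec x j + A j i * h) - b j) ^ 2
        = (∑ j, (A.mulVec x j - b j) ^ 2) + ((2*h) * (v i) + h^2 * T i) := by
      have e4 : ∀ j : Fin m, ((A.mulVec x j + A j i * h) - b j) ^ 2
          = (A.mulVec x j - b j) ^ 2 + (2*h) * (r j * A j i) + h^2 * (A j i)^2 := by
        intro j; simp only [hrdef]; ring
      rw [Finset.sum_congr rfl fun j _ => e4 j, Finset.sum_add_distrib,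
        Finset.sum_add_distrib, ← Finset.mul_sum, ← Finset.mul_sum]
      simp only [hvdef, hTdef]
      ring
    rw [e2, e3, mul_add] at h0
    linarith
  -- core per-coordinate facts
  have hcore : ∀ i ∈ F, v i ≠ 0 ∧ lam * (1 - p) ≤ |x i| ^ ((2:ℝ) - p) * alpha := by
    intro i hi
    have hxi : x i ≠ 0 := (Finset.mem_filter.mp hi).2
    set u := |x i| with hudef
    have hu : 0 < u := abs_pos.mpr hxi
    set w := x i / u with hwdef
    have hwu : w * u = x i := div_mul_cancel₀ (x i) hu.ne'
    have hwabs : |w| = 1 := by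
      rw [hwdef, abs_div, abs_abs, div_self hu.ne']
    have hw2 : w ^ 2 = 1 := by
      rw [← sq_abs, hwabs]; norm_num
    have key' : ∀ τ : ℝ, -u ≤ τ →
        0 ≤ 2*τ*(w * v i) + τ^2 * T i + lam * ((u+τ)^p - u^p) := by
      intro τ hτ
      have hk := hkey i (w*τ)
      have hx1 : x i + w*τ = w*(u+τ) := by rw [← hwu]; ring
      have habs : |x i + w*τ| = u + τ := by
        rw [hx1, abs_mul, hwabs, one_mul, abs_of_nonneg (by linarith)]
      rw [habs, ← hudef] at hk
      have e5 : 2*(w*τ)*(v i) + (w*τ)^2 * T i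
          = 2*τ*(w * v i) + τ^2 * T i := by
        have : (w*τ)^2 = w^2 * τ^2 := by ring
        rw [show 2*(w*τ)*(v i) + (w*τ)^2 * T i
            = 2*τ*(w*v i) + (w^2) * (τ^2 * T i) from by ring, hw2, one_mul]
      linarith [hk, e5.symm.le, e5.le]
    have hbern : ∀ τ : ℝ, -u ≤ τ → (u+τ)^p ≤ u^p + p * u^(p-1) * τ := by
      intro τ hτ
      have hs : -1 ≤ τ/u := by
        rw [neg_le, ← neg_div]
        exact (div_le_one hu).mpr (by linarith)
      have h1 : u + τ = u * (1 + τ/u) := by field_simp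
      have h2 : (u * (1+τ/u))^p = u^p * (1+τ/u)^p :=
        Real.mul_rpow hu.le (by linarith)
      have h3 : (1+τ/u)^p ≤ 1 + p*(τ/u) :=
        rpow_one_add_le_one_add_mul_self hs hp0.le hp1.le
      have h4 : u^(p-1) = u^p / u := by
        rw [Real.rpow_sub hu, Real.rpow_one]
      calc (u+τ)^p = u^p * (1+τ/u)^p := by rw [h1, h2]
        _ ≤ u^p * (1 + p*(τ/u)) :=
            mul_le_mul_of_nonneg_left h3 (Real.rpow_nonneg hu.le p)
        _ = u^p + p * u^(p-1) * τ := by rw [h4]; field_simp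
    have hupm : 0 < u^(p-1) := Real.rpow_pos_of_pos hu _
    have hupp : 0 < u^p := Real.rpow_pos_of_pos hu _
    set c := 2*(w*v i) + lam * p * u^(p-1) with hcdef
    have keyB : ∀ τ : ℝ, -u ≤ τ → 0 ≤ τ * c + τ^2 * T i := by
      intro τ hτ
      have h1 := key' τ hτ
      have h2 := hbern τ hτ
      have h3 : lam * ((u+τ)^p - u^p) ≤ lam * (p * u^(p-1) * τ) :=
        mul_le_mul_of_nonneg_left (by linarith) hlam.le
      rw [hcdef]
      nlinarith [h1, h3]
    have hc1 : c ≤ 0 := by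
      apply aux_limit (hTnn i) hu
      intro σ hσ0 hσu
      have h1 := keyB (-σ) (by linarith)
      have h2 : σ * c ≤ σ * (σ * T i) := by nlinarith
      exact le_of_mul_le_mul_left h2 hσ0
    have hc2 : 0 ≤ c := by
      have h := aux_limit (c := -c) (hTnn i) (one_pos)
        (fun σ hσ0 _ => by
          have h1 := keyB σ (by linarith)
          have h2 : σ * (-c) ≤ σ * (σ * T i) := by nlinarith
          exact le_of_mul_le_mul_left h2 hσ0)
      linarith
    have hc0 : c = 0 := le_antisymm hc1 hc2
    have hwv : 2*(w*v i) = -(lam * p * u^(p-1)) := by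
      rw [hcdef] at hc0; linarith
    have hlpu : 0 < lam * p * u^(p-1) := by positivity
    have hv0 : v i ≠ 0 := by
      intro hvv
      rw [hvv, mul_zero, mul_zero] at hwv
      linarith
    -- zero-out inequality
    have hz := key' (-u) (le_refl _)
    have h0p : (u + -u)^p = 0 := by
      rw [add_neg_cancel]
      exact Real.zero_rpow hp0.ne'
    rw [h0p] at hz
    have huu : u * u^(p-1) = u^p := by
      have e : (1:ℝ) + (p-1) = p := by ring
      calc u * u^(p-1) = u^(1:ℝ) * u^(p-1) := by rw [Real.rpow_one]
        _ = u^((1:ℝ)+(p-1)) := (Real.rpow_add hu _ _).symm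
        _ = u^p := by rw [e]
    have h5 : 2*(-u)*(w*v i) = lam * p * u^p := by
      have e : 2*(-u)*(w*v i) = (-u) * (2*(w*v i)) := by ring
      rw [e, hwv, ← huu]; ring
    rw [h5] at hz
    have hfin : lam * (1-p) * u^p ≤ u^2 * T i := by nlinarith [hz]
    have h6 : u^2 * T i ≤ u^2 * alpha := mul_le_mul_of_nonneg_left (hTα i) (sq_nonneg u)
    have h7 : u^((2:ℝ)-p) * u^p = u^2 := by
      rw [← Real.rpow_add hu]
      have e : ((2:ℝ)-p) + p = (2:ℝ) := by ring
      rw [e, Real.rpow_two]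
    refine ⟨hv0, ?_⟩
    have h8 : (u^((2:ℝ)-p)*alpha) * u^p = u^2 * alpha := by
      rw [show (u^((2:ℝ)-p)*alpha)*u^p = (u^((2:ℝ)-p)*u^p)*alpha from by ring, h7]
    have h9 : (lam * (1-p)) * u^p ≤ (u^((2:ℝ)-p)*alpha) * u^p := by
      rw [h8]; linarith
    exact le_of_mul_le_mul_right h9 hupp
  -- positivity of alpha
  obtain ⟨i0, hi0⟩ := hFne
  obtain ⟨hv0, hineq0⟩ := hcore i0 hi0
  have hu0 : 0 < |x i0| ^ ((2:ℝ)-p) :=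
    Real.rpow_pos_of_pos (abs_pos.mpr (Finset.mem_filter.mp hi0).2) _
  have hα : 0 < alpha := by
    by_contra hα
    push_neg at hα
    have h1 : |x i0|^((2:ℝ)-p) * alpha ≤ 0 := mul_nonpos_of_nonneg_of_nonpos hu0.le hα
    have h2 : 0 < lam * (1-p) := mul_pos hlam (by linarith)
    linarith
  have h2p : (2:ℝ) - p ≠ 0 := by linarith
  -- the lower-bound constant
  set q := 2 - p with hqdef
  have hq : 0 < q := by rw [hqdef]; linarith
  set D := lam * (p * (1-p)) / (2 * alpha) with hDdef
  have hD : 0 < D := div_pos (mul_pos hlam (mul_pos hp0 (by linarith))) (by linarith)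
  set Lp := D ^ (p / q) with hLpdef
  have hLp0 : 0 < Lp := Real.rpow_pos_of_pos hD _
  have hLp : ∀ i ∈ F, Lp ≤ |x i| ^ p := by
    intro i hi
    obtain ⟨-, h2⟩ := hcore i hi
    have hu : 0 < |x i| := abs_pos.mpr (Finset.mem_filter.mp hi).2
    have hD2 : D ≤ |x i| ^ q := by
      rw [hDdef, div_le_iff₀ (by linarith : (0:ℝ) < 2*alpha), hqdef]
      nlinarith [h2, mul_pos hlam (show (0:ℝ) < 1-p by linarith),
        mul_nonneg (mul_pos hlam (show (0:ℝ) < 1-p by linarith)).le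
          (show (0:ℝ) ≤ 2 - p by linarith)]
    have h3 := Real.rpow_le_rpow hD.le hD2 (div_pos hp0 hq).le
    rw [← Real.rpow_mul hu.le] at h3
    have e : q * (p/q) = p := by field_simp
    rwa [e] at h3
  -- sums
  have hsum1 : (F.card : ℝ) * Lp ≤ ∑ i ∈ F, |x i| ^ p := by
    calc (F.card : ℝ) * Lp = ∑ _i ∈ F, Lp := by rw [Finset.sum_const, nsmul_eq_mul]
      _ ≤ ∑ i ∈ F, |x i|^p := Finset.sum_le_sum hLp
  have hsum2 : ∑ i ∈ F, |x i|^p ≤ ∑ i, |x i|^p :=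
    Finset.sum_le_sum_of_subset_of_nonneg (Finset.subset_univ F)
      (fun i _ _ => Real.rpow_nonneg (abs_nonneg _) _)
  -- residual is nonzero
  have hr0 : ∃ j, r j ≠ 0 := by
    by_contra hall
    push_neg at hall
    exact hv0 (Finset.sum_eq_zero fun j _ => by rw [hall j, zero_mul])
  obtain ⟨j0, hj0⟩ := hr0
  have hrpos : 0 < ∑ j, r j ^ 2 := by
    refine Finset.sum_pos' (fun _ _ => sq_nonneg _) ⟨j0, Finset.mem_univ _, ?_⟩
    rw [← sq_abs]
    exact pow_pos (abs_pos.mpr hj0) 2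
  -- compare with zero
  have hf0 : fp m n A b lam p x ≤ B := by
    have h0 := hmin 0
    have e0 : fp m n A b lam p (0 : Fin n → ℝ) = B := by
      simp [fp, Matrix.mulVec_zero, Real.zero_rpow hp0.ne', hBdef]
    rwa [e0] at h0
  have hpen : lam * (∑ i, |x i| ^ p) < B := by
    have hfx : fp m n A b lam p x = (∑ j, r j ^ 2) + lam * ∑ i, |x i|^p := by
      simp only [fp, hrdef]
    rw [hfx] at hf0
    linarith
  -- the comparison B ≤ lam * k * Lp
  have hk0 : (0:ℝ) < k := by
    have : (0:ℕ) < k := by omega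
    exact_mod_cast this
  set C := 2*alpha/(p*(1-p)) with hCdef
  have hC : 0 < C := div_pos (by linarith) (mul_pos hp0 (by linarith))
  have hane : alpha ≠ 0 := ne_of_gt hα
  have h1pne : (1:ℝ) - p ≠ 0 := by linarith
  have hDC : D = lam / C := by
    rw [hDdef, hCdef]
    field_simp
  have hsqB : (0:ℝ) ≤ Real.sqrt B := Real.sqrt_nonneg _
  have h2q : (0:ℝ) < 2/q := by positivity
  have hRHSnn : 0 ≤ (k:ℝ)^(p/2-1) * C^(p/2) * Real.sqrt B ^ q := by positivity
  have hpow := Real.rpow_le_rpow hRHSnn hlb h2q.le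
  have hL : ((k:ℝ)^(p/2-1) * C^(p/2) * Real.sqrt B ^ q)^(2/q)
      = (k:ℝ)⁻¹ * C^(p/q) * B := by
    rw [Real.mul_rpow (by positivity) (by positivity),
        Real.mul_rpow (by positivity) (by positivity),
        ← Real.rpow_mul hk0.le, ← Real.rpow_mul hC.le, ← Real.rpow_mul hsqB]
    have e1 : (p/2-1)*(2/q) = -1 := by
      rw [hqdef]; field_simp
      rw [div_eq_iff h2p]; ring
    have e2 : (p/2)*(2/q) = p/q := by
      rw [hqdef]; ring
    have e3 : q*(2/q) = 2 := by field_simp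
    rw [e1, e2, e3, Real.rpow_neg_one, Real.rpow_two, Real.sq_sqrt hB.le]
  rw [hL] at hpow
  have hCq : 0 < C^(p/q) := Real.rpow_pos_of_pos hC _
  have hE : lam * ((k:ℝ) * Lp) = (k:ℝ) * (lam^((2:ℝ)/q) / C^(p/q)) := by
    rw [hLpdef, hDC, Real.div_rpow hlam.le hC.le]
    have e : (2:ℝ)/q = 1 + p/q := by
      rw [hqdef]; field_simp
      rw [one_add_div h2p]; ring
    rw [e, Real.rpow_add hlam, Real.rpow_one]
    field_simp
  have hcomp : B ≤ lam * ((k:ℝ) * Lp) := by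
    rw [hE]
    have hstep : (k:ℝ)⁻¹ * C^(p/q) * B / C^(p/q) ≤ lam^((2:ℝ)/q) / C^(p/q) := by
      apply div_le_div_of_nonneg_right hpow hCq.le
    calc B = (k:ℝ) * ((k:ℝ)⁻¹ * C^(p/q) * B / C^(p/q)) := by
          field_simp
      _ ≤ (k:ℝ) * (lam^((2:ℝ)/q)/C^(p/q)) :=
          mul_le_mul_of_nonneg_left hstep hk0.le
  -- finish
  have hKk : (k:ℝ) ≤ (F.card:ℝ) := by exact_mod_cast hFk
  have hchain1 : lam * ((k:ℝ)*Lp) ≤ lam * ((F.card:ℝ)*Lp) :=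
    mul_le_mul_of_nonneg_left (mul_le_mul_of_nonneg_right hKk hLp0.le) hlam.le
  have hchain2 : lam * ((F.card:ℝ)*Lp) ≤ lam * ∑ i, |x i|^p :=
    mul_le_mul_of_nonneg_left (hsum1.trans hsum2) hlam.le
  linarith
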